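/- Let n ≥ 1 and k ∈ {0,1,...,n}. For all real numbers γ₁, ..., γₙ in [0,1], the sum over all subsets L ⊆ {1,...,n} of cardinality n−k of the products ∏_{j∈L} γⱼ, multiplied by k!(n−k)!/n!, is at least ((n−k)/n)·(γ₁ + ··· + γₙ) + k + 1 − n. -/

import Mathlib

open Finset

/-- Weierstrass product inequality. -/
lemma weier_prod {ι : Type*} (s : Finset ι) (f : ι → ℝ)
    (h : ∀ i ∈ s, f i ∈ Set.Icc (0 : ℝ) 1) :
    1 - (s.card : ℝ) + ∑ i ∈ s, f i ≤ ∏ i ∈ s, f i := by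
  induction s using Finset.cons_induction with
  | empty => simp
  | cons a s ha ih =>
    have hmem : ∀ i ∈ s, f i ∈ Set.Icc (0 : ℝ) 1 := fun i hi => h i (mem_cons_of_mem hi)
    have ih' := ih hmem
    have hP0 : (0 : ℝ) ≤ ∏ i ∈ s, f i :=
      Finset.prod_nonneg fun i hi => (hmem i hi).1
    have hP1 : ∏ i ∈ s, f i ≤ 1 :=
      Finset.prod_le_one (fun i hi => (hmem i hi).1) (fun i hi => (hmem i hi).2)
    have ha0 : (0 : ℝ) ≤ f a := (h a (mem_cons_self a s)).1
    have ha1 : f a ≤ 1 := (h a (mem_cons_self a s)).2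
    rw [Finset.prod_cons, Finset.sum_cons, Finset.card_cons]
    push_cast
    nlinarith [mul_nonneg (sub_nonneg.2 ha1) (sub_nonneg.2 (hP1))]

lemma count_mem_powersetCard (n m : ℕ) (hm : m ≤ n) (j : Fin n) :
    ((Finset.powersetCard m (Finset.univ : Finset (Fin n))).filter (fun L => j ∈ L)).card * n
      = m * n.choose m := by
  have hfilt : ((Finset.powersetCard m (Finset.univ : Finset (Fin n))).filter (fun L => j ∉ L))
      = Finset.powersetCard m ((Finset.univ : Finset (Fin n)).erase j) := by
    ext L
    simp only [mem_filter, mem_powersetCard, Finset.subset_erase, Finset.subset_univ,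
      true_and]
    tauto
  have hcards : ((Finset.powersetCard m (Finset.univ : Finset (Fin n))).filter (fun L => j ∈ L)).card
      + (n - 1).choose m = n.choose m := by
    have h := Finset.card_filter_add_card_filter_not
      (s := Finset.powersetCard m (Finset.univ : Finset (Fin n))) (p := fun L => j ∈ L)
    rw [hfilt] at h
    simpa [Finset.card_powersetCard, Finset.card_erase_of_mem, Finset.card_univ] using h
  rcases Nat.eq_zero_or_pos m with hm0 | hm0
  · subst hm0
    simp only [Nat.choose_zero_right] at hcards ⊢
    have : ((Finset.powersetCard 0 (Finset.univ : Finset (Fin n))).filter (fun L => j ∈ L)).card = 0 := by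
      omega
    rw [this, Nat.zero_mul, Nat.zero_mul]
  have hn0 : 0 < n := Nat.lt_of_lt_of_le hm0 hm
  have h1 : (n - 1) + 1 = n := by omega
  have h2 : (m - 1) + 1 = m := by omega
  have hpas := Nat.choose_succ_succ (n - 1) (m - 1)
  simp only [Nat.succ_eq_add_one] at hpas
  rw [h2, h1] at hpas
  have hmul := Nat.add_one_mul_choose_eq (n - 1) (m - 1)
  rw [h1, h2] at hmul
  have ht : ((Finset.powersetCard m (Finset.univ : Finset (Fin n))).filter (fun L => j ∈ L)).card
      = (n - 1).choose (m - 1) := by omega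
  rw [ht, Nat.mul_comm, hmul, Nat.mul_comm]

theorem gamma_angles_ineq (n : ℕ) (hn : 0 < n) (k : ℕ) (hk : k ≤ n)
    (γ : Fin n → ℝ) (hγ : ∀ j, γ j ∈ Set.Icc (0 : ℝ) 1) :
    ((k.factorial : ℝ) * ((n - k).factorial : ℝ) / (n.factorial : ℝ)) *
      ∑ L ∈ Finset.powersetCard (n - k) (Finset.univ : Finset (Fin n)), ∏ j ∈ L, γ j
    ≥ (((n : ℝ) - (k : ℝ)) / (n : ℝ)) * ∑ j, γ j + (k : ℝ) + 1 - (n : ℝ) := by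
  set m := n - k with hm
  have hmn : m ≤ n := Nat.sub_le n k
  set P := Finset.powersetCard m (Finset.univ : Finset (Fin n)) with hP
  -- step 1: lower bound the sum of products
  have step1 : ∑ L ∈ P, ∏ j ∈ L, γ j ≥ ∑ L ∈ P, (1 - (m : ℝ) + ∑ j ∈ L, γ j) := by
    apply Finset.sum_le_sum
    intro L hL
    have hcard : L.card = m := (Finset.mem_powersetCard.1 hL).2
    have := weier_prod L γ (fun i _ => hγ i)
    rw [hcard] at this
    exact this
  -- step 2: compute the double sum
  have step2 : ∑ L ∈ P, ∑ j ∈ L, γ j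
      = ∑ j : Fin n, ((P.filter (fun L => j ∈ L)).card : ℝ) * γ j := by
    have : ∀ L ∈ P, ∑ j ∈ L, γ j = ∑ j : Fin n, if j ∈ L then γ j else 0 := by
      intro L _
      rw [Finset.sum_ite_mem]
      congr 1
      simp
    rw [Finset.sum_congr rfl this, Finset.sum_comm]
    congr 1
    ext j
    rw [Finset.sum_ite, Finset.sum_const_zero, add_zero, Finset.sum_const, nsmul_eq_mul]
  -- coefficient identity over the reals
  have hcoef : ∀ j : Fin n, ((P.filter (fun L => j ∈ L)).card : ℝ)
      = (m : ℝ) * (n.choose m : ℝ) / (n : ℝ) := by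
    intro j
    have h := count_mem_powersetCard n m hmn j
    have hn' : (n : ℝ) ≠ 0 := Nat.cast_ne_zero.2 hn.ne'
    field_simp
    exact_mod_cast h
  have hcard_P : (P.card : ℝ) = (n.choose m : ℝ) := by
    simp [hP, Finset.card_powersetCard, Finset.card_univ]
  have hchoosepos : (0 : ℝ) < (n.choose m : ℝ) := by
    exact_mod_cast Nat.choose_pos hmn
  -- factorial identity
  have hfact : (k.factorial : ℝ) * ((n - k).factorial : ℝ) / (n.factorial : ℝ)
      = 1 / (n.choose m : ℝ) := by
    have h := Nat.choose_mul_factorial_mul_factorial hk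
    have hsymm : n.choose m = n.choose k := by rw [hm, Nat.choose_symm hk]
    have hfn : (0 : ℝ) < (n.factorial : ℝ) := by exact_mod_cast n.factorial_pos
    rw [hsymm]
    rw [div_eq_div_iff hfn.ne' (by exact_mod_cast (Nat.choose_pos hk).ne' : (Nat.choose n k : ℝ) ≠ 0)]
    push_cast [← h]
    ring
  -- combine
  have hsum : ∑ L ∈ P, (1 - (m : ℝ) + ∑ j ∈ L, γ j)
      = (n.choose m : ℝ) * (1 - (m : ℝ)) + (m : ℝ) * (n.choose m : ℝ) / (n : ℝ) * ∑ j, γ j := by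
    rw [Finset.sum_add_distrib, Finset.sum_const, step2, nsmul_eq_mul, hcard_P]
    rw [Finset.sum_congr rfl (fun j _ => by rw [hcoef j]), ← Finset.mul_sum]
  have key : ∑ L ∈ P, ∏ j ∈ L, γ j
      ≥ (n.choose m : ℝ) * (1 - (m : ℝ)) + (m : ℝ) * (n.choose m : ℝ) / (n : ℝ) * ∑ j, γ j := by
    rw [← hsum]; exact step1
  rw [hfact]
  have hmcast : (m : ℝ) = (n : ℝ) - (k : ℝ) := by
    rw [hm]; push_cast [Nat.cast_sub hk]; ring
  have hn' : (0 : ℝ) < (n : ℝ) := by exact_mod_cast hn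
  rw [ge_iff_le, ← hmcast]
  have hfinal : (k : ℝ) + 1 - (n : ℝ) = 1 - (m : ℝ) := by rw [hmcast]; ring
  calc (m : ℝ) / (n : ℝ) * ∑ j, γ j + (k : ℝ) + 1 - (n : ℝ)
      = (m : ℝ) / (n : ℝ) * ∑ j, γ j + (1 - (m : ℝ)) := by rw [hmcast]; ring
    _ = (1 / (n.choose m : ℝ)) * ((n.choose m : ℝ) * (1 - (m : ℝ))
          + (m : ℝ) * (n.choose m : ℝ) / (n : ℝ) * ∑ j, γ j) := by
        field_simp
        ring
    _ ≤ (1 / (n.choose m : ℝ)) * ∑ L ∈ P, ∏ j ∈ L, γ j := by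
        apply mul_le_mul_of_nonneg_left key (by positivity)
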